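/- Let m, M, a > 0 and let L₄ > 0 satisfy M/a³ − m/(4L₄³) − M/((a/2)² + L₄²)^{3/2} = 0. Then at the point (0, L₄): (i) α := ∂²V/∂x²(0,L₄) = 3Ma²/(4((a/2)² + L₄²)^{5/2}) > 0, and (ii) γ := ∂²V/∂y²(0,L₄) = 3m/(4L₄³) + 3ML₄²/((a/2)² + L₄²)^{5/2} > 0. -/

import Mathlib

lemma sqrt_hd (s c x : ℝ) (h : 0 < (x+s)^2 + c) :
    HasDerivAt (fun t => Real.sqrt ((t+s)^2+c)) ((x+s)/Real.sqrt ((x+s)^2+c)) x := by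
  have h1 : HasDerivAt (fun t : ℝ => (t+s)^2 + c) (2*(x+s)) x := by
    simpa using (((hasDerivAt_id x).add_const s).pow 2).add_const c
  have := (Real.hasDerivAt_sqrt (ne_of_gt h)).comp x h1
  have hs : Real.sqrt ((x+s)^2+c) ≠ 0 := ne_of_gt (Real.sqrt_pos.mpr h)
  refine this.congr_deriv ?_
  set r := Real.sqrt ((x+s)^2+c)
  field_simp

lemma L1 (s c x : ℝ) (h : 0 < (x+s)^2 + c) :
    HasDerivAt (fun t => (Real.sqrt ((t+s)^2+c))⁻¹)
      (-((x+s)/(Real.sqrt ((x+s)^2+c))^3)) x := by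
  have hs : Real.sqrt ((x+s)^2+c) ≠ 0 := ne_of_gt (Real.sqrt_pos.mpr h)
  have := (sqrt_hd s c x h).inv hs
  refine this.congr_deriv ?_
  set r := Real.sqrt ((x+s)^2+c)
  field_simp

lemma L2 (s c x : ℝ) (h : 0 < (x+s)^2 + c) :
    HasDerivAt (fun t => -((t+s)/(Real.sqrt ((t+s)^2+c))^3))
      (-(1/(Real.sqrt ((x+s)^2+c))^3) + 3*(x+s)^2/(Real.sqrt ((x+s)^2+c))^5) x := by
  have hs : Real.sqrt ((x+s)^2+c) ≠ 0 := ne_of_gt (Real.sqrt_pos.mpr h)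
  have h3 : (Real.sqrt ((x+s)^2+c))^3 ≠ 0 := pow_ne_zero _ hs
  have hq3 := ((sqrt_hd s c x h).pow 3).inv h3
  have hlin : HasDerivAt (fun t : ℝ => t + s) 1 x := (hasDerivAt_id x).add_const s
  have := (hlin.mul hq3).neg
  have hfe : (fun t => -((t+s)/(Real.sqrt ((t+s)^2+c))^3))
      = (fun t => -((t+s) * ((Real.sqrt ((t+s)^2+c))^3)⁻¹)) := by
    funext t; rw [div_eq_mul_inv]
  rw [hfe]
  refine this.congr_deriv ?_
  simp only [Pi.pow_apply, Pi.inv_apply]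
  set r := Real.sqrt ((x+s)^2+c)
  push_cast
  field_simp
  ring

lemma sqrty_hd (c x : ℝ) (h : 0 < c + x^2) :
    HasDerivAt (fun t => Real.sqrt (c+t^2)) (x/Real.sqrt (c+x^2)) x := by
  have h1 : HasDerivAt (fun t : ℝ => c + t^2) (2*x) x := by
    simpa using ((hasDerivAt_pow 2 x).const_add c)
  have := (Real.hasDerivAt_sqrt (ne_of_gt h)).comp x h1
  have hs : Real.sqrt (c+x^2) ≠ 0 := ne_of_gt (Real.sqrt_pos.mpr h)
  refine this.congr_deriv ?_
  set r := Real.sqrt (c+x^2)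
  field_simp

lemma L1y (c x : ℝ) (h : 0 < c + x^2) :
    HasDerivAt (fun t => (Real.sqrt (c+t^2))⁻¹)
      (-(x/(Real.sqrt (c+x^2))^3)) x := by
  have hs : Real.sqrt (c+x^2) ≠ 0 := ne_of_gt (Real.sqrt_pos.mpr h)
  have := (sqrty_hd c x h).inv hs
  refine this.congr_deriv ?_
  set r := Real.sqrt (c+x^2)
  field_simp

lemma L2y (c x : ℝ) (h : 0 < c + x^2) :
    HasDerivAt (fun t => -(t/(Real.sqrt (c+t^2))^3))
      (-(1/(Real.sqrt (c+x^2))^3) + 3*x^2/(Real.sqrt (c+x^2))^5) x := by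
  have hs : Real.sqrt (c+x^2) ≠ 0 := ne_of_gt (Real.sqrt_pos.mpr h)
  have h3 : (Real.sqrt (c+x^2))^3 ≠ 0 := pow_ne_zero _ hs
  have hq3 := ((sqrty_hd c x h).pow 3).inv h3
  have := ((hasDerivAt_id x).mul hq3).neg
  have hfe : (fun t => -(t/(Real.sqrt (c+t^2))^3))
      = (fun t => -(t * ((Real.sqrt (c+t^2))^3)⁻¹)) := by
    funext t; rw [div_eq_mul_inv]
  rw [hfe]
  have h2 : HasDerivAt (fun t => -(t * ((Real.sqrt (c+t^2))^3)⁻¹))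
      (-(1 * ((Real.sqrt (c+x^2))^3)⁻¹ + x * (-((3:ℕ) * (Real.sqrt (c+x^2)) ^ (3-1) * (x / Real.sqrt (c+x^2))) / ((Real.sqrt (c+x^2))^3)^2))) x := by
    exact this
  convert h2 using 1
  set r := Real.sqrt (c+x^2)
  push_cast
  field_simp
  ring

theorem stmt17 (m M a : ℝ) (hm : 0 < m) (hM : 0 < M) (ha : 0 < a)
    (L₄ : ℝ) (hL₄ : 0 < L₄)
    (hcrit : M/a^3 - m/(4*L₄^3) - M/(Real.sqrt ((a/2)^2 + L₄^2))^3 = 0) :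
    let V : ℝ → ℝ → ℝ := fun x y =>
      M/(2*a^3)*(x^2+y^2) + m/(4*Real.sqrt (x^2+y^2))
        + M/(2*Real.sqrt ((x+a/2)^2+y^2)) + M/(2*Real.sqrt ((x-a/2)^2+y^2))
    (deriv (fun x => deriv (fun x' => V x' L₄) x) 0
        = 3*M*a^2/(4*(Real.sqrt ((a/2)^2 + L₄^2))^5) ∧
      0 < 3*M*a^2/(4*(Real.sqrt ((a/2)^2 + L₄^2))^5)) ∧
    (deriv (fun y => deriv (fun y' => V 0 y') y) L₄
        = 3*m/(4*L₄^3) + 3*M*L₄^2/(Real.sqrt ((a/2)^2 + L₄^2))^5 ∧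
      0 < 3*m/(4*L₄^3) + 3*M*L₄^2/(Real.sqrt ((a/2)^2 + L₄^2))^5) := by
  intro V
  have hRpos : (0:ℝ) < Real.sqrt ((a/2)^2 + L₄^2) :=
    Real.sqrt_pos.mpr (add_pos (by positivity) (pow_pos hL₄ 2))
  have haL : (0:ℝ) < a^3 := pow_pos ha 3
  refine ⟨⟨?_, by positivity⟩, ?_, by positivity⟩
  · -- x direction
    have hinner : ∀ x : ℝ, HasDerivAt (fun x' => V x' L₄)
        (M/(2*a^3)*(2*x) + m/4 * (-(x/(Real.sqrt (x^2+L₄^2))^3))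
          + M/2 * (-((x+a/2)/(Real.sqrt ((x+a/2)^2+L₄^2))^3))
          + M/2 * (-((x-a/2)/(Real.sqrt ((x-a/2)^2+L₄^2))^3))) x := by
      intro x
      have h0 : HasDerivAt (fun t : ℝ => (Real.sqrt (t^2+L₄^2))⁻¹)
          (-(x/(Real.sqrt (x^2+L₄^2))^3)) x := by
        simpa using L1 0 (L₄^2) x (by positivity)
      have h1 := L1 (a/2) (L₄^2) x (by positivity)
      have h2 : HasDerivAt (fun t : ℝ => (Real.sqrt ((t-a/2)^2+L₄^2))⁻¹)
          (-((x-a/2)/(Real.sqrt ((x-a/2)^2+L₄^2))^3)) x := by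
        simpa [sub_eq_add_neg] using L1 (-(a/2)) (L₄^2) x (by positivity)
      have hq : HasDerivAt (fun t : ℝ => M/(2*a^3)*(t^2+L₄^2)) (M/(2*a^3)*(2*x)) x := by
        have h : HasDerivAt (fun t : ℝ => t^2+L₄^2) (2*x) x := by
          simpa using (hasDerivAt_pow 2 x).add_const (L₄^2)
        exact h.const_mul _
      have hcomb := ((hq.add (h0.const_mul (m/4))).add (h1.const_mul (M/2))).add
        (h2.const_mul (M/2))
      have hfun : (fun x' => V x' L₄) = (fun t => M/(2*a^3)*(t^2+L₄^2)
          + m/4*(Real.sqrt (t^2+L₄^2))⁻¹ + M/2*(Real.sqrt ((t+a/2)^2+L₄^2))⁻¹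
          + M/2*(Real.sqrt ((t-a/2)^2+L₄^2))⁻¹) := by
        funext t; simp only [V]; ring
      rw [hfun]; exact hcomb
    have hd1 : deriv (fun x' => V x' L₄) = (fun x =>
        M/(2*a^3)*(2*x) + m/4 * (-(x/(Real.sqrt (x^2+L₄^2))^3))
          + M/2 * (-((x+a/2)/(Real.sqrt ((x+a/2)^2+L₄^2))^3))
          + M/2 * (-((x-a/2)/(Real.sqrt ((x-a/2)^2+L₄^2))^3))) :=
      funext fun x => (hinner x).deriv
    simp only [hd1]
    -- outer derivative at 0
    have c1 : HasDerivAt (fun x : ℝ => M/(2*a^3)*(2*x)) (M/(2*a^3)*2) 0 := by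
      simpa using ((hasDerivAt_id (0:ℝ)).const_mul (2:ℝ)).const_mul (M/(2*a^3))
    have c2 : HasDerivAt (fun x : ℝ => -(x/(Real.sqrt (x^2+L₄^2))^3))
        (-(1/(Real.sqrt ((0:ℝ)^2+L₄^2))^3) + 3*(0:ℝ)^2/(Real.sqrt ((0:ℝ)^2+L₄^2))^5) 0 := by
      have := L2 0 (L₄^2) 0 (by positivity)
      simpa only [add_zero] using this
    have c3 := L2 (a/2) (L₄^2) 0 (by positivity)
    have c4 : HasDerivAt (fun x : ℝ => -((x-a/2)/(Real.sqrt ((x-a/2)^2+L₄^2))^3))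
        (-(1/(Real.sqrt ((0-a/2)^2+L₄^2))^3) + 3*(0-a/2)^2/(Real.sqrt ((0-a/2)^2+L₄^2))^5) 0 := by
      have := L2 (-(a/2)) (L₄^2) 0 (by positivity)
      simpa only [sub_eq_add_neg] using this
    have houter := ((c1.add (c2.const_mul (m/4))).add (c3.const_mul (M/2))).add
      (c4.const_mul (M/2))
    erw [houter.deriv]
    rw [show ((0:ℝ)+a/2)^2 + L₄^2 = (a/2)^2 + L₄^2 by ring,
        show ((0:ℝ)-a/2)^2 + L₄^2 = (a/2)^2 + L₄^2 by ring,
        show ((0:ℝ))^2 + L₄^2 = L₄^2 by ring,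
        Real.sqrt_sq hL₄.le]
    have hRne : Real.sqrt ((a/2)^2 + L₄^2) ≠ 0 := ne_of_gt hRpos
    have hLne : L₄ ≠ 0 := ne_of_gt hL₄
    have hane : a ≠ 0 := ne_of_gt ha
    linear_combination hcrit
  · -- y direction
    have hinner : ∀ y : ℝ, 0 < y → HasDerivAt (fun y' => V 0 y')
        (M/(2*a^3)*(2*y) + m/4 * (-(y/(Real.sqrt (y^2))^3))
          + M/2 * (-(y/(Real.sqrt ((a/2)^2+y^2))^3))
          + M/2 * (-(y/(Real.sqrt ((a/2)^2+y^2))^3))) y := by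
      intro y hy
      have h0 : HasDerivAt (fun t : ℝ => (Real.sqrt (t^2))⁻¹)
          (-(y/(Real.sqrt (y^2))^3)) y := by
        simpa using L1y 0 y (by simpa using pow_pos hy 2)
      have h1 : HasDerivAt (fun t : ℝ => (Real.sqrt ((a/2)^2+t^2))⁻¹)
          (-(y/(Real.sqrt ((a/2)^2+y^2))^3)) y :=
        L1y ((a/2)^2) y (by positivity)
      have hq : HasDerivAt (fun t : ℝ => M/(2*a^3)*(t^2)) (M/(2*a^3)*(2*y)) y := by
        have h : HasDerivAt (fun t : ℝ => t^2) (2*y) y := by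
          simpa using (hasDerivAt_pow 2 y)
        exact h.const_mul _
      have hcomb := ((hq.add (h0.const_mul (m/4))).add (h1.const_mul (M/2))).add
        (h1.const_mul (M/2))
      have hfun : (fun y' => V 0 y') = (fun t => M/(2*a^3)*(t^2)
          + m/4*(Real.sqrt (t^2))⁻¹ + M/2*(Real.sqrt ((a/2)^2+t^2))⁻¹
          + M/2*(Real.sqrt ((a/2)^2+t^2))⁻¹) := by
        funext t
        simp only [V]
        rw [show ((0:ℝ))^2 + t^2 = t^2 by ring,
            show ((0:ℝ)+a/2)^2 + t^2 = (a/2)^2+t^2 by ring,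
            show ((0:ℝ)-a/2)^2 + t^2 = (a/2)^2+t^2 by ring]
        ring
      rw [hfun]; exact hcomb
    have hev : (fun y => deriv (fun y' => V 0 y') y) =ᶠ[nhds L₄] (fun y =>
        M/(2*a^3)*(2*y) + m/4 * (-(y/(Real.sqrt (y^2))^3))
          + M/2 * (-(y/(Real.sqrt ((a/2)^2+y^2))^3))
          + M/2 * (-(y/(Real.sqrt ((a/2)^2+y^2))^3))) := by
      filter_upwards [eventually_gt_nhds hL₄] with y hy
      exact (hinner y hy).deriv
    rw [hev.deriv_eq]
    have c1 : HasDerivAt (fun y : ℝ => M/(2*a^3)*(2*y)) (M/(2*a^3)*2) L₄ := by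
      simpa using ((hasDerivAt_id L₄).const_mul (2:ℝ)).const_mul (M/(2*a^3))
    have c2 : HasDerivAt (fun y : ℝ => -(y/(Real.sqrt (y^2))^3))
        (-(1/(Real.sqrt (L₄^2))^3) + 3*L₄^2/(Real.sqrt (L₄^2))^5) L₄ := by
      simpa using L2y 0 L₄ (by simpa using pow_pos hL₄ 2)
    have c3 := L2y ((a/2)^2) L₄ (by positivity)
    have houter := ((c1.add (c2.const_mul (m/4))).add (c3.const_mul (M/2))).add
      (c3.const_mul (M/2))
    erw [houter.deriv]
    rw [Real.sqrt_sq hL₄.le]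
    have hRne : Real.sqrt ((a/2)^2 + L₄^2) ≠ 0 := ne_of_gt hRpos
    have hLne : L₄ ≠ 0 := ne_of_gt hL₄
    have hane : a ≠ 0 := ne_of_gt ha
    have hid : L₄^2/L₄^5 = 1/L₄^3 := by
      field_simp
    linear_combination hcrit + (3*m/4)*hid
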